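/- Let m ≥ 1 and let H be the Hilbert space ℓ² of square-summable complex families indexed by ℤ^m. Let l : ℤ^m → ℂ and let G : H →L[ℂ] H be a bounded linear operator; write G_{n,k} := (G e_k) n. Assume that for every n ∈ ℤ^m the row (G_{n,k})_{k ∈ ℤ^m} is absolutely summable. Suppose λ ∈ ℂ and u ∈ H with u ≠ 0 satisfy l n * u n + (G u) n = λ * u n for every n ∈ ℤ^m. Then there exists n₀ ∈ ℤ^m such that |λ − (l n₀ + G_{n₀,n₀})| ≤ ∑_{k ≠ n₀} |G_{n₀,k}|. -/

import Mathlib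

open scoped ENNReal

/-- Evaluation at an index, as a continuous linear map on `ℓ²`. -/
noncomputable def lpEvalCLM {I : Type*} (n : I) :
    lp (fun _ : I => ℂ) 2 →L[ℂ] ℂ :=
  LinearMap.mkContinuous
    { toFun := fun f => f n
      map_add' := fun f g => by simp [lp.coeFn_add]
      map_smul' := fun c f => by simp [lp.coeFn_smul] }
    1 (fun f => by
      show ‖(f : I → ℂ) n‖ ≤ 1 * ‖f‖
      simpa using lp.norm_apply_le_norm (by norm_num) f n)

@[simp] lemma lpEvalCLM_apply {I : Type*} (n : I) (f : lp (fun _ : I => ℂ) 2) :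
    lpEvalCLM n f = f n := rfl

/-- Generalized Gershgorin eigenvalue localization on ℓ²(ℤ^m): any eigenvalue of the
operator `u ↦ (n ↦ l n * u n) + G u` lies in some Gershgorin disk centered at the
diagonal entry `l n₀ + G_{n₀,n₀}` with radius the off-diagonal absolute row sum. -/
theorem gershgorin_l2_diagonal_plus_bounded
    (m : ℕ) (hm : 1 ≤ m)
    (l : (Fin m → ℤ) → ℂ)
    (G : lp (fun _ : (Fin m → ℤ) => ℂ) 2 →L[ℂ] lp (fun _ : (Fin m → ℤ) => ℂ) 2)
    (hrow : ∀ n : Fin m → ℤ,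
      Summable (fun k : Fin m → ℤ => ‖(G (lp.single 2 k 1)) n‖))
    (lam : ℂ) (u : lp (fun _ : (Fin m → ℤ) => ℂ) 2) (hu : u ≠ 0)
    (heig : ∀ n : Fin m → ℤ, l n * u n + (G u) n = lam * u n) :
    ∃ n₀ : Fin m → ℤ,
      ‖lam - (l n₀ + (G (lp.single 2 n₀ 1)) n₀)‖ ≤
        ∑' k : {k : Fin m → ℤ // k ≠ n₀}, ‖(G (lp.single 2 (k : Fin m → ℤ) 1)) n₀‖ := by
  classical
  -- find an index where `u` is nonzero
  have hex : ∃ n, u n ≠ 0 := by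
    by_contra h
    push_neg at h
    exact hu (lp.ext (funext h))
  obtain ⟨n₁, hn₁⟩ := hex
  have hc : (0 : ℝ) < ‖u n₁‖ := by simpa using hn₁
  -- the set of indices with large `‖u n‖` is finite
  have hsq : Summable (fun n => ‖u n‖ ^ (2 : ℝ≥0∞).toReal) :=
    (lp.memℓp u).summable (by norm_num)
  have hfin : {n : Fin m → ℤ | ‖u n₁‖ ≤ ‖u n‖}.Finite := by
    have h0 := hsq.tendsto_cofinite_zero
    have hpos : (0 : ℝ) < ‖u n₁‖ ^ (2 : ℝ≥0∞).toReal := Real.rpow_pos_of_pos hc _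
    have hev : {n : Fin m → ℤ |
        ¬ ‖u n‖ ^ (2 : ℝ≥0∞).toReal < ‖u n₁‖ ^ (2 : ℝ≥0∞).toReal}.Finite := by
      simpa [Filter.eventually_cofinite] using h0.eventually (gt_mem_nhds hpos)
    refine hev.subset fun n hn => ?_
    simp only [Set.mem_setOf_eq, not_lt] at *
    exact Real.rpow_le_rpow (norm_nonneg _) hn ENNReal.toReal_nonneg
  -- pick a maximizer of `‖u ·‖`
  have hne : hfin.toFinset.Nonempty := ⟨n₁, by simp⟩
  obtain ⟨n₀, hn₀mem, hn₀max⟩ := hfin.toFinset.exists_max_image (fun n => ‖u n‖) hne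
  have hn₀T : ‖u n₁‖ ≤ ‖u n₀‖ := by simpa using hfin.mem_toFinset.1 hn₀mem
  have hmax : ∀ n, ‖u n‖ ≤ ‖u n₀‖ := by
    intro n
    by_cases h : ‖u n₁‖ ≤ ‖u n‖
    · exact hn₀max n (hfin.mem_toFinset.2 h)
    · exact le_trans (le_of_not_ge h) hn₀T
  have hn₀pos : (0 : ℝ) < ‖u n₀‖ := lt_of_lt_of_le hc hn₀T
  refine ⟨n₀, ?_⟩
  set g : (Fin m → ℤ) → ℂ := fun k => (G (lp.single 2 k 1)) n₀ with hg
  -- expand `(G u) n₀` as a sum over the matrix entries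
  have h1 : HasSum (fun k => lp.single 2 k (u k)) u :=
    lp.hasSum_single (by norm_num) u
  have h2 : HasSum (fun k => (G (lp.single 2 k (u k))) n₀) ((G u) n₀) := by
    simpa using ((lpEvalCLM n₀).comp G).hasSum h1
  have key : ∀ k, (G (lp.single 2 k (u k))) n₀ = u k * g k := by
    intro k
    have hs : lp.single 2 k (u k) =
        u k • (lp.single 2 k (1 : ℂ) : lp (fun _ : (Fin m → ℤ) => ℂ) 2) := by
      rw [← lp.single_smul, smul_eq_mul, mul_one]
    rw [hs, map_smul, lp.coeFn_smul]
    simp [hg, smul_eq_mul]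
  have h3 : HasSum (fun k => u k * g k) ((G u) n₀) := by
    simpa [funext key] using h2
  -- remove the diagonal term
  have h5 := hasSum_ite_sub_hasSum h3 n₀
  have hsupp : (Function.support fun n => ite (n = n₀) (0 : ℂ) (u n * g n)) ⊆
      {k : Fin m → ℤ | k ≠ n₀} := by
    intro n hn
    simp only [Function.mem_support] at hn
    intro hEq
    exact hn (by simp [hEq])
  have h6 := (hasSum_subtype_iff_of_support_subset hsupp).2 h5
  have hdiag : (G u) n₀ - u n₀ * g n₀ = (lam - (l n₀ + g n₀)) * u n₀ := by
    have := heig n₀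
    have hGu : (G u) n₀ = lam * u n₀ - l n₀ * u n₀ := by linear_combination this
    rw [hGu]; ring
  have h4 : HasSum (fun k : {k : Fin m → ℤ // k ≠ n₀} => u k * g k)
      ((lam - (l n₀ + g n₀)) * u n₀) := by
    rw [← hdiag]
    convert (show HasSum ((fun n => if n = n₀ then (0:ℂ) else u n * g n) ∘
      (Subtype.val : {k : Fin m → ℤ // k ≠ n₀} → Fin m → ℤ)) _ from h6) using 1
    funext k
    simp only [Function.comp_apply]
    exact (if_neg k.2).symm
  -- norm estimates
  have hgsub : Summable (fun k : {k : Fin m → ℤ // k ≠ n₀} => ‖g k‖) :=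
    (hrow n₀).subtype _
  have hnorm : Summable (fun k : {k : Fin m → ℤ // k ≠ n₀} => ‖u k * g k‖) := by
    refine Summable.of_nonneg_of_le (fun _ => norm_nonneg _) (fun k => ?_)
      (hgsub.mul_left ‖u n₀‖)
    rw [norm_mul]
    exact mul_le_mul_of_nonneg_right (hmax k) (norm_nonneg _)
  have hle : ‖(lam - (l n₀ + g n₀)) * u n₀‖ ≤
      (∑' k : {k : Fin m → ℤ // k ≠ n₀}, ‖g k‖) * ‖u n₀‖ := by
    rw [← h4.tsum_eq]
    calc ‖∑' k : {k : Fin m → ℤ // k ≠ n₀}, u k * g k‖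
        ≤ ∑' k : {k : Fin m → ℤ // k ≠ n₀}, ‖u k * g k‖ := norm_tsum_le_tsum_norm hnorm
      _ ≤ ∑' k : {k : Fin m → ℤ // k ≠ n₀}, ‖u n₀‖ * ‖g k‖ := by
          refine Summable.tsum_le_tsum (fun k => ?_) hnorm (hgsub.mul_left _)
          rw [norm_mul]
          exact mul_le_mul_of_nonneg_right (hmax k) (norm_nonneg _)
      _ = ‖u n₀‖ * ∑' k : {k : Fin m → ℤ // k ≠ n₀}, ‖g k‖ := tsum_mul_left
      _ = (∑' k : {k : Fin m → ℤ // k ≠ n₀}, ‖g k‖) * ‖u n₀‖ := mul_comm _ _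
  rw [norm_mul] at hle
  exact le_of_mul_le_mul_right hle hn₀pos
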